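/- Let u : ℝ → ℝ be three times continuously differentiable and let Δx > 0. Define cell averages ū_j = (1/Δx) ∫_{x_i + (j−i−1/2)Δx}^{x_i + (j−i+1/2)Δx} u(x) dx for j = i−1, i, i+1. Then with ideal weights d₀ = 1/3, d₁ = 2/3, the combination d₀·(−ū_{i−1}+3ū_i)/2 + d₁·(ū_i+ū_{i+1})/2 equals u(x_i + Δx/2) + O(Δx³) as Δx → 0. -/

import Mathlib

open MeasureTheory intervalIntegral Filter Asymptotics

/-- Cell average of `u` over a cell of width `Δx` centered at `xc`. -/
noncomputable def cellAvg (u : ℝ → ℝ) (xc Δx : ℝ) : ℝ :=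
  (1/Δx) * ∫ x in (xc - Δx/2)..(xc + Δx/2), u x

lemma quad_integral (c0 c1 c2 xi lo hi : ℝ) :
    ∫ x in lo..hi, (c0 + c1*(x - xi) + c2*(x - xi)^2)
      = (c0*hi + c1*(hi - xi)^2/2 + c2*(hi - xi)^3/3)
        - (c0*lo + c1*(lo - xi)^2/2 + c2*(lo - xi)^3/3) := by
  apply intervalIntegral.integral_eq_sub_of_hasDerivAt
  · intro x _
    have h1 : HasDerivAt (fun x : ℝ => x - xi) 1 x := (hasDerivAt_id x).sub_const xi
    have h2 : HasDerivAt (fun x : ℝ => (x - xi)^2) (2*(x - xi)) x := by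
      simpa using h1.fun_pow 2
    have h3 : HasDerivAt (fun x : ℝ => (x - xi)^3) (3*(x - xi)^2) x := by
      simpa using h1.fun_pow 3
    have key := ((hasDerivAt_id' (x := x)).const_mul c0).fun_add
      (((h2.const_mul c1).div_const 2).fun_add ((h3.const_mul c2).div_const 3))
    have heq : c0 + c1*(x - xi) + c2*(x - xi)^2
        = c0 * 1 + (c1 * (2*(x - xi)) / 2 + c2 * (3*(x - xi)^2) / 3) := by ring
    rw [heq]
    convert key using 2
    ring
  · apply Continuous.intervalIntegrable
    fun_prop

set_option maxHeartbeats 1000000 in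
theorem weno3_ideal_weights_third_order (u : ℝ → ℝ) (hu : ContDiff ℝ 3 u) (xi : ℝ) :
    (fun Δx : ℝ =>
        (1/3) * ((-(cellAvg u (xi - Δx) Δx) + 3 * cellAvg u xi Δx) / 2)
        + (2/3) * ((cellAvg u xi Δx + cellAvg u (xi + Δx) Δx) / 2)
        - u (xi + Δx/2))
      =O[nhdsWithin 0 (Set.Ioi 0)] fun Δx : ℝ => Δx^3 := by
  have hu3 : ContDiff ℝ (0 + 3 : ℕ) u := by exact_mod_cast hu
  have hu2 : ContDiff ℝ (1 + 2 : ℕ) u := by exact_mod_cast hu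
  have hu1 : ContDiff ℝ (2 + 1 : ℕ) u := by exact_mod_cast hu
  set u1 : ℝ → ℝ := deriv u with hu1def
  set u2 : ℝ → ℝ := deriv u1 with hu2def
  set u3 : ℝ → ℝ := deriv u2 with hu3def
  have hiter2 : deriv^[2] u = u2 := by
    simp [Function.iterate_succ, Function.comp, hu1def, hu2def]
  have hiter3 : deriv^[3] u = u3 := by
    simp [Function.iterate_succ, Function.comp, hu1def, hu2def, hu3def]
  have hc3 : Continuous u3 := by
    have := (ContDiff.iterate_deriv' 0 3 hu3).continuous
    rwa [hiter3] at this
  have hd2 : Differentiable ℝ u2 := by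
    have := (ContDiff.iterate_deriv' 1 2 hu2).differentiable (by norm_num)
    rwa [hiter2] at this
  have hd1 : Differentiable ℝ u1 := by
    have := (ContDiff.iterate_deriv' 2 1 hu1).differentiable (by norm_num)
    simpa [hu1def] using this
  have hd0 : Differentiable ℝ u := hu.differentiable (by norm_num)
  have hU1 : ∀ y, HasDerivAt u (u1 y) y := fun y => (hd0 y).hasDerivAt
  have hU2 : ∀ y, HasDerivAt u1 (u2 y) y := fun y => (hd1 y).hasDerivAt
  have hU3 : ∀ y, HasDerivAt u2 (u3 y) y := fun y => (hd2 y).hasDerivAt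
  obtain ⟨M, hM⟩ : ∃ M, ∀ y ∈ Set.Icc (xi - 2) (xi + 2), ‖u3 y‖ ≤ M :=
    isCompact_Icc.exists_bound_of_continuousOn hc3.continuousOn
  have hM0 : 0 ≤ M := le_trans (norm_nonneg _) (hM xi ⟨by linarith, by linarith⟩)
  set c0 := u xi with hc0
  set c1 := u1 xi with hc1
  set c2 := u2 xi / 2 with hc2
  rw [Asymptotics.isBigO_iff]
  refine ⟨8 * M, ?_⟩
  filter_upwards [Ioc_mem_nhdsGT_of_mem (by constructor <;> norm_num :
      (0:ℝ) ∈ Set.Ico (0:ℝ) 1)] with a ha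
  obtain ⟨ha0, ha1⟩ := ha
  set r : ℝ := 3 * a / 2 with hr
  have hr0 : 0 < r := by rw [hr]; linarith
  have hr2 : r ≤ 2 := by rw [hr]; linarith
  set s : Set ℝ := Set.Icc (xi - r) (xi + r) with hs
  have hmem : ∀ y ∈ s, ‖y - xi‖ ≤ r := by
    intro y hy
    rw [Real.norm_eq_abs, abs_le]
    exact ⟨by linarith [hy.1], by linarith [hy.2]⟩
  have hxis : xi ∈ s := ⟨by linarith, by linarith⟩
  have hsub : s ⊆ Set.Icc (xi - 2) (xi + 2) := by
    intro y hy
    exact ⟨by linarith [hy.1], by linarith [hy.2]⟩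
  -- second derivative of the remainder
  have h2 : ∀ y ∈ s, ‖u2 y - u2 xi‖ ≤ M * r := by
    intro y hy
    have := Convex.norm_image_sub_le_of_norm_hasDerivWithin_le
      (f := u2) (f' := u3)
      (fun z hz => (hU3 z).hasDerivWithinAt)
      (fun z hz => hM z (hsub hz)) (convex_Icc _ _) hxis hy
    calc ‖u2 y - u2 xi‖ ≤ M * ‖y - xi‖ := this
      _ ≤ M * r := mul_le_mul_of_nonneg_left (hmem y hy) hM0
  -- first derivative of the remainder
  have h1 : ∀ y ∈ s, ‖u1 y - (c1 + 2*c2*(y - xi))‖ ≤ (M * r) * r := by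
    intro y hy
    have hder : ∀ z, HasDerivAt (fun y => u1 y - (c1 + 2*c2*(y - xi)))
        (u2 z - 2*c2) z := by
      intro z
      have : HasDerivAt (fun y : ℝ => c1 + 2*c2*(y - xi)) (2*c2) z := by
        simpa using (((hasDerivAt_id z).sub_const xi).const_mul (2*c2)).const_add c1
      simpa using (hU2 z).fun_sub this
    have hbd : ∀ z ∈ s, ‖u2 z - 2*c2‖ ≤ M * r := by
      intro z hz
      have : u2 z - 2*c2 = u2 z - u2 xi := by rw [hc2]; ring
      rw [this]; exact h2 z hz
    have := Convex.norm_image_sub_le_of_norm_hasDerivWithin_le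
      (fun z hz => (hder z).hasDerivWithinAt) hbd (convex_Icc _ _) hxis hy
    have hzero : u1 xi - (c1 + 2*c2*(xi - xi)) = 0 := by rw [hc1]; ring
    rw [hzero, sub_zero] at this
    calc ‖u1 y - (c1 + 2*c2*(y - xi))‖ ≤ M * r * ‖y - xi‖ := this
      _ ≤ M * r * r := mul_le_mul_of_nonneg_left (hmem y hy) (by positivity)
  -- the remainder itself
  set R : ℝ → ℝ := fun x => u x - (c0 + c1*(x - xi) + c2*(x - xi)^2) with hR
  have h0 : ∀ y ∈ s, ‖R y‖ ≤ M * r * r * r := by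
    intro y hy
    have hder : ∀ z, HasDerivAt R (u1 z - (c1 + 2*c2*(z - xi))) z := by
      intro z
      have h1' : HasDerivAt (fun x : ℝ => x - xi) 1 z := (hasDerivAt_id z).sub_const xi
      have hsq : HasDerivAt (fun x : ℝ => (x - xi)^2) (2*(z - xi)) z := by
        simpa using h1'.fun_pow 2
      have hpoly : HasDerivAt (fun x : ℝ => c0 + c1*(x - xi) + c2*(x - xi)^2)
          (c1 + 2*c2*(z - xi)) z := by
        have := ((h1'.const_mul c1).const_add c0).fun_add (hsq.const_mul c2)
        exact this.congr_deriv (by ring)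
      exact (hU1 z).sub hpoly
    have hbd : ∀ z ∈ s, ‖u1 z - (c1 + 2*c2*(z - xi))‖ ≤ M * r * r := h1
    have := Convex.norm_image_sub_le_of_norm_hasDerivWithin_le
      (fun z hz => (hder z).hasDerivWithinAt) hbd (convex_Icc _ _) hxis hy
    have hzero : R xi = 0 := by rw [hR]; simp [hc0]
    rw [hzero, sub_zero] at this
    calc ‖R y‖ ≤ M * r * r * ‖y - xi‖ := this
      _ ≤ M * r * r * r := mul_le_mul_of_nonneg_left (hmem y hy) (by positivity)
  set B : ℝ := M * r * r * r with hB
  have hBval : B = (27/8) * (M * a^3) := by rw [hB, hr]; ring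
  have hMa3 : 0 ≤ M * a^3 := mul_nonneg hM0 (by positivity)
  -- cell average estimate
  have havg : ∀ xc, |xc - xi| ≤ a →
      |cellAvg u xc a - (c0 + c1*(xc - xi) + c2*((xc - xi)^2 + a^2/12))| ≤ B := by
    intro xc hxc
    have hxc' := abs_le.mp hxc
    have hcell : ∀ x ∈ Set.uIoc (xc - a/2) (xc + a/2), x ∈ s := by
      intro x hx
      rw [Set.uIoc_of_le (by linarith)] at hx
      constructor
      · have := hx.1; rw [hr]; linarith [hxc'.1]
      · have := hx.2; rw [hr]; linarith [hxc'.2]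
    have hPint : IntervalIntegrable (fun x => c0 + c1*(x - xi) + c2*(x - xi)^2)
        volume (xc - a/2) (xc + a/2) := by
      apply Continuous.intervalIntegrable; fun_prop
    have hRint : IntervalIntegrable R volume (xc - a/2) (xc + a/2) := by
      apply Continuous.intervalIntegrable
      rw [hR]; exact hd0.continuous.sub (by fun_prop)
    have hsplit : ∫ x in (xc - a/2)..(xc + a/2), u x
        = (∫ x in (xc - a/2)..(xc + a/2), (c0 + c1*(x - xi) + c2*(x - xi)^2))
          + ∫ x in (xc - a/2)..(xc + a/2), R x := by
      rw [← intervalIntegral.integral_add hPint hRint]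
      apply intervalIntegral.integral_congr
      intro x _
      simp [hR]
    have hRbound : ‖∫ x in (xc - a/2)..(xc + a/2), R x‖ ≤ B * a := by
      have := intervalIntegral.norm_integral_le_of_norm_le_const
        (C := B) (f := R) (a := xc - a/2) (b := xc + a/2)
        (fun x hx => h0 x (hcell x hx))
      calc ‖∫ x in (xc - a/2)..(xc + a/2), R x‖ ≤ B * |(xc + a/2) - (xc - a/2)| := this
        _ = B * a := by rw [show (xc + a/2) - (xc - a/2) = a by ring, abs_of_pos ha0]
    have ha' : a ≠ 0 := ne_of_gt ha0
    have hexact : cellAvg u xc a - (c0 + c1*(xc - xi) + c2*((xc - xi)^2 + a^2/12))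
        = (1/a) * ∫ x in (xc - a/2)..(xc + a/2), R x := by
      rw [cellAvg, hsplit, quad_integral]
      field_simp
      ring
    rw [hexact]
    rw [abs_mul, abs_of_pos (by positivity : (0:ℝ) < 1/a)]
    calc (1/a) * |∫ x in (xc - a/2)..(xc + a/2), R x| ≤ (1/a) * (B * a) := by
          apply mul_le_mul_of_nonneg_left _ (by positivity)
          exact hRbound
      _ = B := by field_simp
  -- the three cell-average errors and the point error
  have eLeft := havg (xi - a) (by rw [show xi - a - xi = -a by ring, abs_neg, abs_of_pos ha0])
  have eMid := havg xi (by rw [sub_self, abs_zero]; linarith)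
  have eRight := havg (xi + a) (by rw [show xi + a - xi = a by ring, abs_of_pos ha0])
  have ep : |u (xi + a/2) - (c0 + c1*((xi + a/2) - xi) + c2*((xi + a/2) - xi)^2)| ≤ B := by
    have := h0 (xi + a/2) ⟨by rw [hr]; linarith, by rw [hr]; linarith⟩
    simpa [hR] using this
  -- the exactness identity for quadratics
  have hgoal : (1/3) * ((-(cellAvg u (xi - a) a) + 3 * cellAvg u xi a) / 2)
        + (2/3) * ((cellAvg u xi a + cellAvg u (xi + a) a) / 2)
        - u (xi + a/2)
      = (1/3) * ((-(cellAvg u (xi - a) a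
            - (c0 + c1*((xi - a) - xi) + c2*(((xi - a) - xi)^2 + a^2/12)))
          + 3 * (cellAvg u xi a - (c0 + c1*(xi - xi) + c2*((xi - xi)^2 + a^2/12)))) / 2)
        + (2/3) * (((cellAvg u xi a - (c0 + c1*(xi - xi) + c2*((xi - xi)^2 + a^2/12)))
          + (cellAvg u (xi + a) a
            - (c0 + c1*((xi + a) - xi) + c2*(((xi + a) - xi)^2 + a^2/12)))) / 2)
        - (u (xi + a/2) - (c0 + c1*((xi + a/2) - xi) + c2*((xi + a/2) - xi)^2)) := by
    ring
  simp only [Real.norm_eq_abs]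
  rw [hgoal]
  have hneLeft := abs_le.mp eLeft
  have hneMid := abs_le.mp eMid
  have hneRight := abs_le.mp eRight
  have hnep := abs_le.mp ep
  rw [abs_of_pos (by positivity : (0:ℝ) < a^3)]
  rw [abs_le]
  constructor <;> nlinarith [hBval, hMa3, hneLeft.1, hneLeft.2, hneMid.1, hneMid.2, hneRight.1, hneRight.2, hnep.1, hnep.2]
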